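/- Let O ⊆ ℝ be open, l : O → ℂ differentiable at every point of O, and suppose there exists c > 0 such that for all x₁, x₂ ∈ O, √((Re l'(x₁))² + (Im l'(x₂))²) ≥ c. If moreover l is injective and O is an interval, then l^{-1} is Lipschitz with Lip(l^{-1}) ≤ 1/c. -/

import Mathlib

open Set

lemma key_mvt_bound
    (O : Set ℝ) (hO : O.OrdConnected)
    (l l' : ℝ → ℂ)
    (hderiv : ∀ x ∈ O, HasDerivWithinAt l (l' x) O x)
    (c : ℝ) (hc : 0 < c)
    (hlb : ∀ x₁ ∈ O, ∀ x₂ ∈ O,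
      c ≤ Real.sqrt ((l' x₁).re ^ 2 + (l' x₂).im ^ 2))
    {a b : ℝ} (ha : a ∈ O) (hb : b ∈ O) (hab : a < b) :
    c * (b - a) ≤ ‖l b - l a‖ := by
  have hIcc : Icc a b ⊆ O := hO.out ha hb
  have hIoo : Ioo a b ⊆ O := fun x hx => hIcc (Ioo_subset_Icc_self hx)
  have hcont : ContinuousOn l (Icc a b) := fun x hx =>
    ((hderiv x (hIcc hx)).continuousWithinAt).mono hIcc
  have hDA : ∀ x ∈ Ioo a b, HasDerivAt l (l' x) x := by
    intro x hx
    exact (hderiv x (hIoo hx)).hasDerivAt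
      (mem_nhds_iff.2 ⟨Ioo a b, hIoo, isOpen_Ioo, hx⟩)
  have hre : ∀ x ∈ Ioo a b, HasDerivAt (fun t => (l t).re) ((l' x).re) x := by
    intro x hx
    exact (Complex.reCLM.hasFDerivAt.comp_hasDerivAt x (hDA x hx))
  have him : ∀ x ∈ Ioo a b, HasDerivAt (fun t => (l t).im) ((l' x).im) x := by
    intro x hx
    exact (Complex.imCLM.hasFDerivAt.comp_hasDerivAt x (hDA x hx))
  obtain ⟨ξ₁, hξ₁, hv₁⟩ := exists_hasDerivAt_eq_slope (fun t => (l t).re)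
    (fun t => (l' t).re) hab (Complex.continuous_re.comp_continuousOn hcont) hre
  obtain ⟨ξ₂, hξ₂, hv₂⟩ := exists_hasDerivAt_eq_slope (fun t => (l t).im)
    (fun t => (l' t).im) hab (Complex.continuous_im.comp_continuousOn hcont) him
  have hba : (0:ℝ) < b - a := by linarith
  have hre' : (l b - l a).re = (l' ξ₁).re * (b - a) := by
    have := hv₁
    field_simp at this
    simp [Complex.sub_re]
    linarith [this]
  have him' : (l b - l a).im = (l' ξ₂).im * (b - a) := by
    have := hv₂
    field_simp at this
    simp [Complex.sub_im]
    linarith [this]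
  have hnorm : ‖l b - l a‖ =
      Real.sqrt ((l' ξ₁).re ^ 2 + (l' ξ₂).im ^ 2) * (b - a) := by
    rw [Complex.norm_def, Complex.normSq_apply, hre', him']
    rw [show (l' ξ₁).re * (b - a) * ((l' ξ₁).re * (b - a)) +
        (l' ξ₂).im * (b - a) * ((l' ξ₂).im * (b - a)) =
        ((l' ξ₁).re ^ 2 + (l' ξ₂).im ^ 2) * (b - a) ^ 2 by ring]
    rw [Real.sqrt_mul (by positivity), Real.sqrt_sq hba.le]
  rw [hnorm]
  exact mul_le_mul_of_nonneg_right
    (hlb ξ₁ (hIoo hξ₁) ξ₂ (hIoo hξ₂)) hba.le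

/-- If `l : O → ℂ` is differentiable on an interval `O ⊆ ℝ`, injective on `O`,
and there is `c > 0` with `√((Re l'(x₁))² + (Im l'(x₂))²) ≥ c` for all
`x₁, x₂ ∈ O`, then the inverse of `l` is Lipschitz with constant at most `1/c`. -/
theorem inverse_lipschitz_of_deriv_lower_bound
    (O : Set ℝ) (hO : O.OrdConnected)
    (l l' : ℝ → ℂ)
    (hderiv : ∀ x ∈ O, HasDerivWithinAt l (l' x) O x)
    (hinj : Set.InjOn l O)
    (c : ℝ) (hc : 0 < c)
    (hlb : ∀ x₁ ∈ O, ∀ x₂ ∈ O,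
      c ≤ Real.sqrt ((l' x₁).re ^ 2 + (l' x₂).im ^ 2)) :
    ∀ x₁ ∈ O, ∀ x₂ ∈ O, |x₂ - x₁| ≤ (1 / c) * ‖l x₂ - l x₁‖ := by
  intro x₁ h₁ x₂ h₂
  rw [one_div, inv_mul_eq_div, le_div_iff₀ hc, mul_comm]
  rcases lt_trichotomy x₁ x₂ with h | h | h
  · rw [abs_of_pos (by linarith)]
    exact key_mvt_bound O hO l l' hderiv c hc hlb h₁ h₂ h
  · simp [h]
  · rw [abs_of_neg (by linarith), neg_sub]
    have := key_mvt_bound O hO l l' hderiv c hc hlb h₂ h₁ h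
    rwa [← norm_neg, neg_sub] at this
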